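/- For every integer 0 ≤ r ≤ (1−1/q̂_a)·n, the Hamming ball B_r(0) = {x ∈ Q : wt(x) ≤ r} satisfies (1/(n+1))·q̂_mg^{n·H_{q̂_mg}(r/n)} ≤ |B_r(0)| ≤ q̂_a^{n·H_{q̂_a}(r/n)}. -/

import Mathlib

open Finset


/-- The Hamming weight of `x ∈ Q = ∏ i, ℤ/q_iℤ`: the number of coordinates `i`
with `x i ≠ 0`. -/
def mwt {n : ℕ} {q : Fin n → ℕ} (x : ∀ i, ZMod (q i)) : ℕ :=
  (Finset.univ.filter (fun i => x i ≠ 0)).card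

/-- `sph q r` is `s_r`, the number of `x ∈ Q` with `wt(x) = r`. -/
noncomputable def sph {n : ℕ} (q : Fin n → ℕ) (r : ℕ) : ℕ :=
  Nat.card {x : ∀ i, ZMod (q i) // mwt x = r}

/-- The arithmetic mean `q̂_a = (1/n) ∑ q_i` of the alphabet sizes. -/
noncomputable def qa {n : ℕ} (q : Fin n → ℕ) : ℝ :=
  (∑ i : Fin n, (q i : ℝ)) / n

/-- `q̂_mg = (∏ (q_i - 1))^{1/n} + 1`. -/
noncomputable def qmg {n : ℕ} (q : Fin n → ℕ) : ℝ :=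
  (∏ i : Fin n, ((q i : ℝ) - 1)) ^ ((n : ℝ)⁻¹) + 1

/-- The `q`-ary entropy function `H_q(x)`; since `Real.logb q 0 = 0` and
`0 * logb q 0 = 0`, this formula also yields `H_q(0) = 0`. -/
noncomputable def entH (qv x : ℝ) : ℝ :=
  x * Real.logb qv (qv - 1) - x * Real.logb qv x - (1 - x) * Real.logb qv (1 - x)

/-- For `0 ≤ r ≤ (1 - 1/q̂_a) n`, the Hamming ball `B_r(0)` satisfies
`(1/(n+1)) q̂_mg^{n H_{q̂_mg}(r/n)} ≤ |B_r(0)| ≤ q̂_a^{n H_{q̂_a}(r/n)}`. -/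
lemma rpow_mul_entH {Q ρ m : ℝ} (hQ : 1 < Q) (h0 : 0 < ρ) (h1 : ρ < 1) :
    Q ^ (m * entH Q ρ)
      = (Q - 1) ^ (m * ρ) * (ρ ^ (-(m * ρ)) * (1 - ρ) ^ (-(m * (1 - ρ)))) := by
  have hQ0 : (0:ℝ) < Q := lt_trans one_pos hQ
  have hQne : Q ≠ 1 := ne_of_gt hQ
  have hQ1 : (0:ℝ) < Q - 1 := by linarith
  have h1' : (0:ℝ) < 1 - ρ := by linarith
  have hexp : m * entH Q ρ
      = Real.logb Q (Q - 1) * (m * ρ) + (Real.logb Q ρ * (-(m * ρ))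
        + Real.logb Q (1 - ρ) * (-(m * (1 - ρ)))) := by
    unfold entH; ring
  rw [hexp, Real.rpow_add hQ0, Real.rpow_add hQ0,
    Real.rpow_mul hQ0.le, Real.rpow_mul hQ0.le, Real.rpow_mul hQ0.le,
    Real.rpow_logb hQ0 hQne hQ1, Real.rpow_logb hQ0 hQne h0, Real.rpow_logb hQ0 hQne h1']

lemma rpow_n_entH {Q : ℝ} (hQ : 1 < Q) {n r : ℕ} (hn : 0 < n) (hr : 0 < r) (hrn : r < n) :
    Q ^ ((n:ℝ) * entH Q ((r:ℝ)/n))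
      = (Q - 1) ^ (r:ℕ) * ((((r:ℝ)/n) ^ (r:ℕ))⁻¹ * ((1 - (r:ℝ)/n) ^ (n - r :ℕ))⁻¹) := by
  have hn' : (0:ℝ) < n := by exact_mod_cast hn
  have h0 : 0 < (r:ℝ)/n := div_pos (by exact_mod_cast hr) hn'
  have h1 : (r:ℝ)/n < 1 := (div_lt_one hn').2 (by exact_mod_cast hrn)
  have e1 : (n:ℝ) * ((r:ℝ)/n) = ((r:ℕ):ℝ) := by field_simp
  have e2 : (n:ℝ) * (1 - (r:ℝ)/n) = ((n - r:ℕ):ℝ) := by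
    rw [Nat.cast_sub hrn.le]; field_simp
  rw [rpow_mul_entH hQ h0 h1, e1, e2, Real.rpow_natCast,
    Real.rpow_neg h0.le, Real.rpow_natCast,
    Real.rpow_neg (by linarith : (0:ℝ) ≤ 1 - (r:ℝ)/n), Real.rpow_natCast]

private def T (n r k : ℕ) : ℕ := n.choose k * (r ^ k * (n - r) ^ (n - k))

lemma T_step_up {n r k : ℕ} (hk : k < r) (hrn : r ≤ n) : T n r k ≤ T n r (k + 1) := by
  have hkn : k < n := lt_of_lt_of_le hk hrn
  have hc : n.choose (k+1) * (k+1) = n.choose k * (n - k) := Nat.choose_succ_right_eq n k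
  have hnk : n - k = (n - (k+1)) + 1 := by omega
  have hmul : T n r k * (k + 1) ≤ T n r (k + 1) * (k + 1) := by
    have h1 : T n r (k+1) * (k+1)
        = n.choose k * (r ^ k * (n - r) ^ (n - (k+1))) * ((n - k) * r) := by
      calc T n r (k+1) * (k+1)
          = (n.choose (k+1) * (k+1)) * (r ^ (k+1) * (n - r) ^ (n - (k+1))) := by unfold T; ring
        _ = (n.choose k * (n - k)) * (r ^ (k+1) * (n - r) ^ (n - (k+1))) := by rw [hc]
        _ = n.choose k * (r ^ k * (n - r) ^ (n - (k+1))) * ((n - k) * r) := by ring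
    have h2 : T n r k * (k+1)
        = n.choose k * (r ^ k * (n - r) ^ (n - (k+1))) * ((k + 1) * (n - r)) := by
      unfold T
      rw [hnk, pow_succ]
      ring
    rw [h1, h2]
    refine Nat.mul_le_mul_left _ ?_
    calc (k + 1) * (n - r) ≤ r * (n - r) := Nat.mul_le_mul_right _ hk
      _ ≤ r * (n - k) := Nat.mul_le_mul_left _ (by omega)
      _ = (n - k) * r := Nat.mul_comm _ _
  exact Nat.le_of_mul_le_mul_right hmul (Nat.succ_pos k)

lemma T_step_down {n r k : ℕ} (hk : r ≤ k) : T n r (k + 1) ≤ T n r k := by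
  by_cases hkn : k < n
  · have hc : n.choose (k+1) * (k+1) = n.choose k * (n - k) := Nat.choose_succ_right_eq n k
    have hnk : n - k = (n - (k+1)) + 1 := by omega
    have hmul : T n r (k + 1) * (k + 1) ≤ T n r k * (k + 1) := by
      have h1 : T n r (k+1) * (k+1)
          = n.choose k * (r ^ k * (n - r) ^ (n - (k+1))) * ((n - k) * r) := by
        calc T n r (k+1) * (k+1)
            = (n.choose (k+1) * (k+1)) * (r ^ (k+1) * (n - r) ^ (n - (k+1))) := by unfold T; ring
          _ = (n.choose k * (n - k)) * (r ^ (k+1) * (n - r) ^ (n - (k+1))) := by rw [hc]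
          _ = n.choose k * (r ^ k * (n - r) ^ (n - (k+1))) * ((n - k) * r) := by ring
      have h2 : T n r k * (k+1)
          = n.choose k * (r ^ k * (n - r) ^ (n - (k+1))) * ((k + 1) * (n - r)) := by
        unfold T
        rw [hnk, pow_succ]
        ring
      rw [h1, h2]
      refine Nat.mul_le_mul_left _ ?_
      calc (n - k) * r ≤ (n - r) * r := Nat.mul_le_mul_right _ (by omega)
        _ ≤ (n - r) * (k + 1) := Nat.mul_le_mul_left _ (by omega)
        _ = (k + 1) * (n - r) := Nat.mul_comm _ _
    exact Nat.le_of_mul_le_mul_right hmul (Nat.succ_pos k)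
  · have : n.choose (k+1) = 0 := Nat.choose_eq_zero_of_lt (by omega)
    simp [T, this]

lemma T_le_T_r {n r : ℕ} (hrn : r ≤ n) (k : ℕ) : T n r k ≤ T n r r := by
  rcases le_or_gt r k with h | h
  · induction k, h using Nat.le_induction with
    | base => exact le_refl _
    | succ m hm ih => exact le_trans (T_step_down hm) ih
  · have key : ∀ d, T n r (r - d) ≤ T n r r := by
      intro d
      induction d with
      | zero => simp
      | succ d ih =>
        rcases le_or_gt (d + 1) r with hd | hd
        · refine le_trans ?_ ih
          have h1 : r - (d+1) < r := by omega
          have h2 : r - (d+1) + 1 = r - d := by omega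
          have := T_step_up (n := n) (k := r - (d+1)) h1 hrn
          rwa [h2] at this
        · have : r - (d+1) = r - d := by omega
          rw [this]; exact ih
    have hk : k = r - (r - k) := by omega
    rw [hk]; exact key (r - k)

lemma six (n r : ℕ) (hrn : r ≤ n) :
    n ^ n ≤ (n + 1) * (n.choose r * (r ^ r * (n - r) ^ (n - r))) := by
  have hsum : n ^ n = ∑ k ∈ Finset.range (n + 1), T n r k := by
    have h := add_pow (R := ℕ) r (n - r) n
    have hrn' : r + (n - r) = n := by omega
    rw [hrn'] at h
    rw [h]
    refine Finset.sum_congr rfl fun k _ => ?_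
    unfold T; push_cast; ring
  have hle : ∑ k ∈ Finset.range (n + 1), T n r k ≤ (n + 1) * T n r r := by
    calc ∑ k ∈ Finset.range (n + 1), T n r k
        ≤ ∑ _k ∈ Finset.range (n + 1), T n r r :=
          Finset.sum_le_sum fun k _ => T_le_T_r hrn k
      _ = (n + 1) * T n r r := by simp [Finset.sum_const, Nat.mul_comm]
  rw [hsum]
  exact hle.trans_eq (by unfold T; ring)

section counting
variable {n : ℕ} {q : Fin n → ℕ}

lemma fiber_card [∀ i, NeZero (q i)] (S : Finset (Fin n)) :
    (Finset.univ.filter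
      (fun x : ∀ i, ZMod (q i) => Finset.univ.filter (fun i => x i ≠ 0) = S)).card
      = ∏ i ∈ S, (q i - 1) := by
  have hset : Finset.univ.filter
      (fun x : ∀ i, ZMod (q i) => Finset.univ.filter (fun i => x i ≠ 0) = S)
      = Fintype.piFinset (fun i => if i ∈ S then Finset.univ.erase 0 else {0}) := by
    ext x
    simp only [mem_filter, mem_univ, true_and, Fintype.mem_piFinset]
    constructor
    · intro h i
      have hmem : (x i ≠ 0) ↔ i ∈ S := by rw [← h]; simp
      by_cases hi : i ∈ S
      · simp [hi, hmem.2 hi]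
      · have hx0 : x i = 0 := not_not.1 (fun hx => hi (hmem.1 hx))
        simp [hi, hx0]
    · intro h
      ext i
      simp only [mem_filter, mem_univ, true_and]
      have := h i
      by_cases hi : i ∈ S
      · simp only [hi, if_true, mem_erase, mem_univ, and_true] at this
        simp [hi, this]
      · simp only [hi, if_false, mem_singleton] at this
        simp [hi, this]
  rw [hset, Fintype.card_piFinset]
  have : ∀ i, (if i ∈ S then (Finset.univ : Finset (ZMod (q i))).erase 0 else {0}).card
      = if i ∈ S then q i - 1 else 1 := by
    intro i
    by_cases hi : i ∈ S <;> simp [hi, Finset.card_erase_of_mem, ZMod.card]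
  calc ∏ i, (if i ∈ S then (Finset.univ : Finset (ZMod (q i))).erase 0 else {0}).card
      = ∏ i, if i ∈ S then q i - 1 else 1 := Finset.prod_congr rfl fun i _ => this i
    _ = ∏ i ∈ S, (q i - 1) := by rw [Finset.prod_ite_mem, Finset.univ_inter]

lemma sphere_card [∀ i, NeZero (q i)] (r : ℕ) :
    (Finset.univ.filter (fun x : ∀ i, ZMod (q i) => mwt x = r)).card
      = ∑ S ∈ Finset.powersetCard r Finset.univ, ∏ i ∈ S, (q i - 1) := by
  rw [Finset.card_eq_sum_card_fiberwise
    (f := fun x : ∀ i, ZMod (q i) => Finset.univ.filter (fun i => x i ≠ 0))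
    (t := Finset.powersetCard r Finset.univ)
    (fun x hx => by
      rw [Finset.mem_coe, Finset.mem_powersetCard]
      exact ⟨Finset.subset_univ _, by simpa [mwt] using (Finset.mem_filter.1 (Finset.mem_coe.1 hx)).2⟩)]
  refine Finset.sum_congr rfl fun S hS => ?_
  rw [← fiber_card S]
  congr 1
  rw [Finset.filter_filter]
  refine Finset.filter_congr fun x _ => ?_
  have hScard : S.card = r := (Finset.mem_powersetCard.1 hS).2
  constructor
  · exact fun h => h.2
  · intro h
    exact ⟨by rw [mwt, h, hScard], h⟩

lemma gen_sum [∀ i, NeZero (q i)] (t : ℝ) :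
    ∑ x : ∀ i, ZMod (q i), t ^ mwt x = ∏ i, (1 + ((q i : ℝ) - 1) * t) := by
  have h1 : ∀ i, (1 + ((q i : ℝ) - 1) * t) = ∑ y : ZMod (q i), (if y = 0 then 1 else t) := by
    intro i
    have : ∀ y : ZMod (q i), (if y = 0 then (1:ℝ) else t) = t + (if y = 0 then 1 - t else 0) := by
      intro y; split <;> ring
    rw [Finset.sum_congr rfl fun y _ => this y, Finset.sum_add_distrib,
      Finset.sum_ite_eq' Finset.univ (0 : ZMod (q i)) (fun _ => (1:ℝ) - t)]
    simp [Finset.sum_const, Finset.card_univ, ZMod.card, nsmul_eq_mul]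
    ring
  rw [Finset.prod_congr rfl fun i _ => h1 i, Finset.prod_univ_sum]
  rw [← Fintype.piFinset_univ]
  refine (Finset.sum_congr rfl fun x _ => ?_).symm
  rw [Finset.prod_ite, Finset.prod_const_one, Finset.prod_const, one_mul, mwt]

lemma gen_upper [∀ i, NeZero (q i)] (r : ℕ) (t : ℝ) (ht0 : 0 < t) (ht1 : t ≤ 1) :
    ((Finset.univ.filter (fun x : ∀ i, ZMod (q i) => mwt x ≤ r)).card : ℝ) * t ^ r
      ≤ ∏ i, (1 + ((q i : ℝ) - 1) * t) := by
  rw [← gen_sum]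
  calc ((Finset.univ.filter (fun x : ∀ i, ZMod (q i) => mwt x ≤ r)).card : ℝ) * t ^ r
      = ∑ x ∈ Finset.univ.filter (fun x : ∀ i, ZMod (q i) => mwt x ≤ r), t ^ r := by
        rw [Finset.sum_const, nsmul_eq_mul]
    _ ≤ ∑ x ∈ Finset.univ.filter (fun x : ∀ i, ZMod (q i) => mwt x ≤ r), t ^ mwt x := by
        refine Finset.sum_le_sum fun x hx => ?_
        exact pow_le_pow_of_le_one ht0.le ht1 (Finset.mem_filter.1 hx).2
    _ ≤ ∑ x : ∀ i, ZMod (q i), t ^ mwt x := by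
        refine Finset.sum_le_sum_of_subset_of_nonneg (Finset.filter_subset _ _) ?_
        intro x _ _; positivity

-- number of r-subsets of univ containing i
lemma count_mem_powersetCard (hn : 1 ≤ n) {r : ℕ} (hr1 : 1 ≤ r) (i : Fin n) :
    ((Finset.powersetCard r (Finset.univ : Finset (Fin n))).filter (fun S => i ∈ S)).card
      = (n - 1).choose (r - 1) := by
  have hcard := Finset.card_powersetCard (r - 1) ((Finset.univ : Finset (Fin n)).erase i)
  rw [Finset.card_erase_of_mem (Finset.mem_univ i), Finset.card_univ, Fintype.card_fin] at hcard
  rw [← hcard]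
  refine Finset.card_bij' (fun S _ => S.erase i) (fun T _ => insert i T) ?_ ?_ ?_ ?_
  · intro S hS
    simp only [Finset.mem_filter, Finset.mem_powersetCard] at hS
    rw [Finset.mem_powersetCard]
    refine ⟨fun j hj => ?_, ?_⟩
    · rw [Finset.mem_erase] at hj ⊢
      exact ⟨hj.1, Finset.mem_univ _⟩
    · rw [Finset.card_erase_of_mem hS.2, hS.1.2]
  · intro T hT
    rw [Finset.mem_powersetCard] at hT
    simp only [Finset.mem_filter, Finset.mem_powersetCard]
    have hiT : i ∉ T := fun h => by simpa using (hT.1 h)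
    refine ⟨⟨Finset.subset_univ _, ?_⟩, Finset.mem_insert_self _ _⟩
    rw [Finset.card_insert_of_notMem hiT, hT.2]
    omega
  · intro S hS
    simp only [Finset.mem_filter] at hS
    exact Finset.insert_erase hS.2
  · intro T hT
    rw [Finset.mem_powersetCard] at hT
    have hiT : i ∉ T := fun h => by simpa using (hT.1 h)
    exact Finset.erase_insert hiT

lemma prod_powersetCard (hn : 1 ≤ n) {r : ℕ} (hr1 : 1 ≤ r) (a : Fin n → ℝ) :
    ∏ S ∈ Finset.powersetCard r (Finset.univ : Finset (Fin n)), ∏ i ∈ S, a i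
      = (∏ i, a i) ^ ((n - 1).choose (r - 1)) := by
  have h1 : ∀ S ∈ Finset.powersetCard r (Finset.univ : Finset (Fin n)),
      ∏ i ∈ S, a i = ∏ i, (if i ∈ S then a i else 1) := by
    intro S _
    rw [Finset.prod_ite_mem, Finset.univ_inter]
  rw [Finset.prod_congr rfl h1, Finset.prod_comm]
  have h2 : ∀ i, ∏ S ∈ Finset.powersetCard r (Finset.univ : Finset (Fin n)),
      (if i ∈ S then a i else 1) = a i ^ ((n-1).choose (r-1)) := by
    intro i
    rw [Finset.prod_ite, Finset.prod_const_one, Finset.prod_const, mul_one,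
      count_mem_powersetCard hn hr1 i]
  rw [Finset.prod_congr rfl fun i _ => h2 i, Finset.prod_pow]

end counting

section amgm
variable {n : ℕ}

-- n-term AM-GM: ∏ b ≤ ((∑ b)/n)^n
lemma prod_le_avg_pow (hn : 1 ≤ n) (b : Fin n → ℝ) (hb : ∀ i, 0 ≤ b i) :
    ∏ i, b i ≤ ((∑ i, b i) / n) ^ n := by
  have hn' : (0:ℝ) < n := by exact_mod_cast hn
  have key := Real.geom_mean_le_arith_mean_weighted Finset.univ (fun _ => 1 / n) b
    (fun i _ => by positivity)
    (by simp [Finset.sum_const, Finset.card_univ]; field_simp)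
    (fun i _ => hb i)
  have hprod : ∏ i, b i ^ (1 / (n:ℝ)) = (∏ i, b i) ^ (1 / (n:ℝ)) :=
    Real.finset_prod_rpow Finset.univ b (fun i _ => hb i) _
  have hsum : ∑ i, (1 / (n:ℝ)) * b i = (∑ i, b i) / n := by
    rw [← Finset.mul_sum]; ring
  rw [hprod, hsum] at key
  have h0 : 0 ≤ (∏ i, b i) ^ (1 / (n:ℝ)) := Real.rpow_nonneg (Finset.prod_nonneg fun i _ => hb i) _
  have := pow_le_pow_left₀ h0 key n
  rwa [← Real.rpow_natCast ((∏ i, b i) ^ (1 / (n:ℝ))) n, ← Real.rpow_mul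
    (Finset.prod_nonneg fun i _ => hb i), one_div, inv_mul_cancel₀ (ne_of_gt hn'),
    Real.rpow_one] at this

-- subset AM-GM
lemma esymm_lower (hn : 1 ≤ n) {r : ℕ} (hr1 : 1 ≤ r) (hrn : r ≤ n) (a : Fin n → ℝ)
    (ha : ∀ i, 0 < a i)
    (hprod : ∏ S ∈ Finset.powersetCard r (Finset.univ : Finset (Fin n)), ∏ i ∈ S, a i
      = (∏ i, a i) ^ ((n - 1).choose (r - 1))) :
    (n.choose r : ℝ) * (∏ i, a i) ^ ((r:ℝ)/n) ≤
      ∑ S ∈ Finset.powersetCard r (Finset.univ : Finset (Fin n)), ∏ i ∈ S, a i := by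
  set s := Finset.powersetCard r (Finset.univ : Finset (Fin n)) with hs
  have hcard : s.card = n.choose r := by
    rw [hs, Finset.card_powersetCard, Finset.card_univ, Fintype.card_fin]
  have hN : 0 < n.choose r := Nat.choose_pos hrn
  have hNr : (0:ℝ) < n.choose r := by exact_mod_cast hN
  have hn' : (0:ℝ) < n := by exact_mod_cast hn
  have hP : ∀ S ∈ s, (0:ℝ) ≤ ∏ i ∈ S, a i := fun S _ => Finset.prod_nonneg fun i _ => (ha i).le
  have key := Real.geom_mean_le_arith_mean_weighted s (fun _ => 1 / (n.choose r : ℝ))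
    (fun S => ∏ i ∈ S, a i) (fun S _ => by positivity)
    (by rw [Finset.sum_const, hcard, nsmul_eq_mul]; field_simp) hP
  have hgm : ∏ S ∈ s, (∏ i ∈ S, a i) ^ (1 / (n.choose r : ℝ))
      = (∏ i, a i) ^ ((r:ℝ)/n) := by
    rw [Real.finset_prod_rpow s _ hP, hprod, ← Real.rpow_natCast (∏ i, a i) ((n-1).choose (r-1)),
      ← Real.rpow_mul (Finset.prod_nonneg fun i _ => (ha i).le)]
    congr 1
    -- ((n-1).choose (r-1)) * (1 / choose n r) = r / n
    have hid : n * (n - 1).choose (r - 1) = n.choose r * r := by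
      have := Nat.add_one_mul_choose_eq (n - 1) (r - 1)
      simp only [Nat.succ_eq_add_one, Nat.sub_add_cancel hn, Nat.sub_add_cancel hr1] at this
      exact this
    have hid' : (n:ℝ) * ((n - 1).choose (r - 1) : ℝ) = (n.choose r : ℝ) * r := by
      exact_mod_cast hid
    field_simp
    linarith [hid']
  have hsum : ∑ S ∈ s, (1 / (n.choose r : ℝ)) * ∏ i ∈ S, a i
      = (∑ S ∈ s, ∏ i ∈ S, a i) / (n.choose r : ℝ) := by
    rw [← Finset.mul_sum]; ring
  rw [hgm, hsum] at key
  rw [mul_comm]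
  exact (le_div_iff₀ hNr).1 key

end amgm

theorem stmt7 (n : ℕ) (hn : 1 ≤ n) (q : Fin n → ℕ) (hq : ∀ i, 2 ≤ q i)
    (r : ℕ) (hr : (r : ℝ) ≤ (1 - 1 / qa q) * n) :
    (1 / ((n : ℝ) + 1)) * qmg q ^ ((n : ℝ) * entH (qmg q) ((r : ℝ) / n))
        ≤ (Nat.card {x : ∀ i, ZMod (q i) // mwt x ≤ r} : ℝ)
      ∧ (Nat.card {x : ∀ i, ZMod (q i) // mwt x ≤ r} : ℝ)
        ≤ qa q ^ ((n : ℝ) * entH (qa q) ((r : ℝ) / n)) := by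
  haveI : ∀ i, NeZero (q i) := fun i => ⟨by have := hq i; omega⟩
  have hn' : (0:ℝ) < n := by exact_mod_cast hn
  -- qa ≥ 2
  have hqa_sum : ∑ i, (q i : ℝ) = qa q * n := by unfold qa; field_simp
  have hqa2 : (2:ℝ) ≤ qa q := by
    unfold qa
    rw [le_div_iff₀ hn']
    calc (2:ℝ) * n = ∑ _i : Fin n, (2:ℝ) := by
          rw [Finset.sum_const, Finset.card_univ, Fintype.card_fin, nsmul_eq_mul]; ring
      _ ≤ ∑ i, (q i : ℝ) := Finset.sum_le_sum fun i _ => by exact_mod_cast hq i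
  have hqa1 : (1:ℝ) < qa q := by linarith
  have hqa0 : (0:ℝ) < qa q := by linarith
  -- qmg ≥ 2
  have hP1 : (1:ℝ) ≤ ∏ i, ((q i : ℝ) - 1) := by
    have := Finset.prod_le_prod (s := Finset.univ) (f := fun _ : Fin n => (1:ℝ))
      (g := fun i => (q i : ℝ) - 1)
      (fun i _ => zero_le_one)
      (fun i _ => by
        have h2 : (2:ℝ) ≤ q i := by exact_mod_cast hq i
        show (1:ℝ) ≤ (q i : ℝ) - 1
        linarith)
    simpa using this
  have hP0 : (0:ℝ) ≤ ∏ i, ((q i : ℝ) - 1) := by linarith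
  have hg1 : (1:ℝ) ≤ (∏ i, ((q i : ℝ) - 1)) ^ ((n:ℝ)⁻¹) :=
    Real.one_le_rpow hP1 (by positivity)
  have hqmg1 : (1:ℝ) < qmg q := by unfold qmg; linarith
  have hqmg_sub : qmg q - 1 = (∏ i, ((q i : ℝ) - 1)) ^ ((n:ℝ)⁻¹) := by unfold qmg; ring
  -- Nat.card = filter card
  have hNcard : (Nat.card {x : ∀ i, ZMod (q i) // mwt x ≤ r})
      = (Finset.univ.filter (fun x : ∀ i, ZMod (q i) => mwt x ≤ r)).card := by
    rw [Nat.card_eq_fintype_card, Fintype.card_subtype]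
  rcases Nat.eq_zero_or_pos r with rfl | hr0
  · -- r = 0
    have hball : Finset.univ.filter (fun x : ∀ i, ZMod (q i) => mwt x ≤ 0)
        = {(0 : ∀ i, ZMod (q i))} := by
      ext x
      simp only [Finset.mem_filter, Finset.mem_univ, true_and, Finset.mem_singleton,
        Nat.le_zero]
      constructor
      · intro h
        have hcard : (Finset.univ.filter (fun i => x i ≠ 0)).card = 0 := h
        rw [Finset.card_eq_zero, Finset.filter_eq_empty_iff] at hcard
        funext i
        simpa using hcard (Finset.mem_univ i)
      · rintro rfl
        simp [mwt]
    have hone : (Nat.card {x : ∀ i, ZMod (q i) // mwt x ≤ 0} : ℝ) = 1 := by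
      rw [hNcard, hball]; simp
    have hent0 : ((0:ℕ):ℝ) / n = 0 := by simp
    rw [hone, hent0]
    have h1 : entH (qmg q) 0 = 0 := by simp [entH]
    have h2 : entH (qa q) 0 = 0 := by simp [entH]
    rw [h1, h2, mul_zero, Real.rpow_zero, Real.rpow_zero, mul_one]
    constructor
    · rw [div_le_one (by positivity)]; linarith
    · exact le_refl 1
  · -- r ≥ 1
    have hρle : (r:ℝ)/n ≤ 1 - 1/qa q := by rw [div_le_iff₀ hn']; exact hr
    have hrn : r < n := by
      by_contra h
      push_neg at h
      have h1 : (1:ℝ) ≤ (r:ℝ)/n := by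
        rw [le_div_iff₀ hn', one_mul]
        exact_mod_cast h
      have : 0 < 1/qa q := by positivity
      linarith
    set ρ : ℝ := (r:ℝ)/n with hρdef
    have hρ0 : 0 < ρ := div_pos (by exact_mod_cast hr0) hn'
    have hρ1 : ρ < 1 := (div_lt_one hn').2 (by exact_mod_cast hrn)
    have hA : (0:ℝ) < 1 - ρ := by linarith
    have hAeq : 1 - ρ = ((n - r : ℕ):ℝ) / n := by
      rw [Nat.cast_sub hrn.le, hρdef]; field_simp
    have hC0 : (0:ℝ) < n.choose r := by exact_mod_cast Nat.choose_pos hrn.le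
    constructor
    · -- LOWER BOUND
      rw [hρdef, rpow_n_entH hqmg1 (by omega) hr0 hrn, hqmg_sub, ← hρdef]
      -- (qmg-1)^r = P^(r/n)
      have hgr : ((∏ i, ((q i : ℝ) - 1)) ^ ((n:ℝ)⁻¹)) ^ (r:ℕ)
          = (∏ i, ((q i : ℝ) - 1)) ^ ((r:ℝ)/n) := by
        rw [← Real.rpow_natCast ((∏ i, ((q i : ℝ) - 1)) ^ ((n:ℝ)⁻¹)) r,
          ← Real.rpow_mul hP0]
        congr 1
        field_simp
      rw [hgr]
      -- six in ℝ
      have hsixR : ((n:ℝ))^(n:ℕ) ≤ ((n:ℝ)+1) * ((n.choose r : ℝ)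
          * ((r:ℝ)^(r:ℕ) * ((n - r : ℕ):ℝ)^(n - r : ℕ))) := by
        have := six n r hrn.le
        exact_mod_cast this
      have hD0 : (0:ℝ) < (r:ℝ)^(r:ℕ) * ((n - r : ℕ):ℝ)^(n - r : ℕ) := by
        have h1 : (0:ℝ) < (r:ℝ) := by exact_mod_cast hr0
        have h2 : (0:ℝ) < ((n - r : ℕ):ℝ) := by
          have : 0 < n - r := by omega
          exact_mod_cast this
        positivity
      have hval : ρ ^ (r:ℕ) * (1 - ρ) ^ (n - r : ℕ)
          = ((r:ℝ)^(r:ℕ) * ((n - r : ℕ):ℝ)^(n - r : ℕ)) / (n:ℝ)^(n:ℕ) := by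
        rw [hρdef, hAeq, div_pow, div_pow, div_mul_div_comm, ← pow_add,
          Nat.add_sub_cancel' hrn.le]
      -- key numeric ineq
      have hkey : (1/((n:ℝ)+1)) * ((ρ ^ (r:ℕ))⁻¹ * ((1 - ρ) ^ (n - r : ℕ))⁻¹)
          ≤ (n.choose r : ℝ) := by
        rw [← mul_inv, hval, inv_div]
        have heq : (1/((n:ℝ)+1)) * ((n:ℝ)^(n:ℕ) / ((r:ℝ)^(r:ℕ) * ((n - r : ℕ):ℝ)^(n - r : ℕ)))
            = (n:ℝ)^(n:ℕ) / (((n:ℝ)+1) * ((r:ℝ)^(r:ℕ) * ((n - r : ℕ):ℝ)^(n - r : ℕ))) := by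
          field_simp
        rw [heq, div_le_iff₀ (by positivity)]
        calc ((n:ℝ))^(n:ℕ) ≤ ((n:ℝ)+1) * ((n.choose r : ℝ)
              * ((r:ℝ)^(r:ℕ) * ((n - r : ℕ):ℝ)^(n - r : ℕ))) := hsixR
          _ = (n.choose r:ℝ) * (((n:ℝ)+1) * ((r:ℝ)^(r:ℕ) * ((n - r : ℕ):ℝ)^(n - r : ℕ))) := by
              ring
      -- esymm lower bound and cast to ball
      have hapos : ∀ i, (0:ℝ) < (q i : ℝ) - 1 := by
        intro i
        have h2 : (2:ℝ) ≤ q i := by exact_mod_cast hq i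
        linarith
      have hesymm := esymm_lower hn hr0 hrn.le (fun i => (q i : ℝ) - 1) hapos
        (prod_powersetCard hn hr0 (fun i => (q i : ℝ) - 1))
      have hcast : ∑ S ∈ Finset.powersetCard r (Finset.univ : Finset (Fin n)),
            ∏ i ∈ S, ((q i : ℝ) - 1)
          = ((∑ S ∈ Finset.powersetCard r (Finset.univ : Finset (Fin n)),
            ∏ i ∈ S, (q i - 1) : ℕ) : ℝ) := by
        rw [Nat.cast_sum]
        refine Finset.sum_congr rfl fun S _ => ?_
        rw [Nat.cast_prod]
        refine Finset.prod_congr rfl fun i _ => ?_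
        rw [Nat.cast_sub (by have := hq i; omega)]
        simp
      have hsub : ((∑ S ∈ Finset.powersetCard r (Finset.univ : Finset (Fin n)),
            ∏ i ∈ S, (q i - 1) : ℕ) : ℝ)
          ≤ (Nat.card {x : ∀ i, ZMod (q i) // mwt x ≤ r} : ℝ) := by
        rw [hNcard, ← sphere_card r]
        have hsubset : Finset.univ.filter (fun x : ∀ i, ZMod (q i) => mwt x = r)
            ⊆ Finset.univ.filter (fun x : ∀ i, ZMod (q i) => mwt x ≤ r) := by
          intro x hx
          simp only [Finset.mem_filter] at hx ⊢
          exact ⟨hx.1, le_of_eq hx.2⟩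
        exact_mod_cast Finset.card_le_card hsubset
      calc (1/((n:ℝ)+1)) * ((∏ i, ((q i : ℝ) - 1)) ^ ((r:ℝ)/n)
              * (((ρ) ^ (r:ℕ))⁻¹ * ((1 - ρ) ^ (n - r : ℕ))⁻¹))
          = ((1/((n:ℝ)+1)) * (((ρ) ^ (r:ℕ))⁻¹ * ((1 - ρ) ^ (n - r : ℕ))⁻¹))
              * (∏ i, ((q i : ℝ) - 1)) ^ ((r:ℝ)/n) := by ring
        _ ≤ (n.choose r : ℝ) * (∏ i, ((q i : ℝ) - 1)) ^ ((r:ℝ)/n) := by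
            exact mul_le_mul_of_nonneg_right hkey (Real.rpow_nonneg hP0 _)
        _ ≤ ∑ S ∈ Finset.powersetCard r (Finset.univ : Finset (Fin n)),
              ∏ i ∈ S, ((q i : ℝ) - 1) := hesymm
        _ = _ := hcast
        _ ≤ _ := hsub
    · -- UPPER BOUND
      rw [hρdef, rpow_n_entH hqa1 (by omega) hr0 hrn, ← hρdef]
      set t : ℝ := ρ / ((1 - ρ) * (qa q - 1)) with htdef
      have hqa1' : (0:ℝ) < qa q - 1 := by linarith
      have ht0 : 0 < t := div_pos hρ0 (mul_pos hA hqa1')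
      have hρQ : ρ * qa q ≤ qa q - 1 := by
        have h := mul_le_mul_of_nonneg_right hρle hqa0.le
        have he : (1 - 1/qa q) * qa q = qa q - 1 := by field_simp
        rw [he] at h; linarith [h]
      have ht1 : t ≤ 1 := by
        rw [htdef, div_le_one (mul_pos hA hqa1')]
        nlinarith [hρQ, hρ1, hqa1]
      -- generating function bound
      have hgen := gen_upper (q := q) r t ht0 ht1
      have hb : ∀ i : Fin n, (0:ℝ) ≤ 1 + ((q i : ℝ) - 1) * t := by
        intro i
        have : (2:ℝ) ≤ q i := by exact_mod_cast hq i
        nlinarith [ht0]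
      have hprodle := prod_le_avg_pow hn (fun i => 1 + ((q i : ℝ) - 1) * t) hb
      have hsumb : (∑ i, (1 + ((q i : ℝ) - 1) * t)) / n = 1 / (1 - ρ) := by
        rw [Finset.sum_add_distrib, Finset.sum_const, Finset.card_univ, Fintype.card_fin]
        have h1 : ∑ i, ((q i : ℝ) - 1) * t = (qa q * n - n) * t := by
          rw [← Finset.sum_mul, Finset.sum_sub_distrib, hqa_sum, Finset.sum_const,
            Finset.card_univ, Fintype.card_fin]
          simp [nsmul_eq_mul]
        rw [h1]
        have h2 : (qa q * n - n) * t = n * (ρ / (1 - ρ)) := by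
          rw [htdef]
          field_simp
        rw [h2]
        field_simp
        ring
      rw [hsumb] at hprodle
      have hkey : (Nat.card {x : ∀ i, ZMod (q i) // mwt x ≤ r} : ℝ) * t ^ (r:ℕ)
          ≤ (1 / (1 - ρ)) ^ (n:ℕ) := by
        rw [hNcard]
        exact le_trans hgen hprodle
      have htr : (0:ℝ) < t ^ (r:ℕ) := pow_pos ht0 r
      have hfinal : (Nat.card {x : ∀ i, ZMod (q i) // mwt x ≤ r} : ℝ)
          ≤ (1 / (1 - ρ)) ^ (n:ℕ) / t ^ (r:ℕ) := by
        rw [le_div_iff₀ htr]; exact hkey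
      refine hfinal.trans (le_of_eq ?_)
      -- (1/(1-ρ))^n / t^r = (qa-1)^r * ((ρ^r)⁻¹ * ((1-ρ)^(n-r))⁻¹)
      have hApow : (1 - ρ) ^ (n - r : ℕ) * (1 - ρ) ^ (r:ℕ) = (1 - ρ) ^ (n:ℕ) := by
        rw [← pow_add, Nat.sub_add_cancel hrn.le]
      have htpow : t ^ (r:ℕ) = ρ ^ (r:ℕ) / ((1 - ρ) ^ (r:ℕ) * (qa q - 1) ^ (r:ℕ)) := by
        rw [htdef, div_pow, mul_pow]
      have h1ρ : (1 - ρ) ≠ 0 := ne_of_gt hA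
      have hρne : ρ ≠ 0 := ne_of_gt hρ0
      have hqane : qa q - 1 ≠ 0 := ne_of_gt hqa1'
      rw [htpow]
      field_simp
      rw [mul_assoc, mul_comm ((1 - ρ) ^ r), hApow, one_div, inv_pow,
        inv_mul_cancel₀ (pow_ne_zero _ h1ρ)]
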